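/- arXiv:1507.07197 — 2 statements merged into one kernel-verified Lean document; each statement's English description precedes it below -/
import Mathlib

section
/- The Petersen graph is hypohamiltonian: it has no Hamiltonian cycle, but for every vertex v, the graph obtained by deleting v has a Hamiltonian cycle. -/
/-- A graph is hamiltonian if it contains a Hamiltonian cycle. -/
def IsHamiltonianGraph {V : Type*} [DecidableEq V] (G : SimpleGraph V) : Prop :=
  ∃ (a : V) (p : G.Walk a a), p.IsHamiltonianCycle

/-- A graph is hypohamiltonian if it is not hamiltonian but deleting any
vertex yields a hamiltonian graph. -/
def Hypohamiltonian {V : Type*} [DecidableEq V] (G : SimpleGraph V) : Prop :=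
  Nonempty V ∧ ¬ IsHamiltonianGraph G ∧
    ∀ v : V, IsHamiltonianGraph (G.induce ({v}ᶜ : Set V))

/-- The Petersen graph as the Kneser graph K(5,2). -/
def petersenGraph : SimpleGraph {s : Finset (Fin 5) // s.card = 2} where
  Adj a b := Disjoint (a : Finset (Fin 5)) (b : Finset (Fin 5))
  symm := ⟨fun a b h => h.symm⟩
  loopless := ⟨fun a h => by
    have hempty := disjoint_self.mp h
    have h2 := a.2
    rw [hempty] at h2
    simp at h2⟩

/-! ### Auxiliary setup -/

abbrev PV5 := {s : Finset (Fin 5) // s.card = 2}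

instance : DecidableRel petersenGraph.Adj :=
  fun a b => inferInstanceAs (Decidable (Disjoint (a : Finset (Fin 5)) (b : Finset (Fin 5))))

instance (v : PV5) : DecidablePred (· ∈ ({v}ᶜ : Set PV5)) :=
  fun x => decidable_of_iff (x ≠ v) (by simp)

abbrev W (v : PV5) := petersenGraph.induce ({v}ᶜ : Set PV5)

def mm (v x : PV5) (h : x ≠ v := by decide) : ({v}ᶜ : Set PV5) :=
  ⟨x, by simpa using h⟩

def wadj {v : PV5} (a b : ({v}ᶜ : Set PV5)) (h : petersenGraph.Adj a.1 b.1) :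
    (W v).Adj a b := h

def p01 : PV5 := ⟨{0,1}, by decide⟩
def p02 : PV5 := ⟨{0,2}, by decide⟩
def p03 : PV5 := ⟨{0,3}, by decide⟩
def p04 : PV5 := ⟨{0,4}, by decide⟩
def p12 : PV5 := ⟨{1,2}, by decide⟩
def p13 : PV5 := ⟨{1,3}, by decide⟩
def p14 : PV5 := ⟨{1,4}, by decide⟩
def p23 : PV5 := ⟨{2,3}, by decide⟩
def p24 : PV5 := ⟨{2,4}, by decide⟩
def p34 : PV5 := ⟨{3,4}, by decide⟩

def c01 : (W p01).Walk (mm p01 p02) (mm p01 p02) :=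
  .cons (wadj (mm p01 p02) (mm p01 p13) (by decide)) <|
  .cons (wadj (mm p01 p13) (mm p01 p24) (by decide)) <|
  .cons (wadj (mm p01 p24) (mm p01 p03) (by decide)) <|
  .cons (wadj (mm p01 p03) (mm p01 p14) (by decide)) <|
  .cons (wadj (mm p01 p14) (mm p01 p23) (by decide)) <|
  .cons (wadj (mm p01 p23) (mm p01 p04) (by decide)) <|
  .cons (wadj (mm p01 p04) (mm p01 p12) (by decide)) <|
  .cons (wadj (mm p01 p12) (mm p01 p34) (by decide)) <|
  .cons (wadj (mm p01 p34) (mm p01 p02) (by decide)) .nil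

def c02 : (W p02).Walk (mm p02 p01) (mm p02 p01) :=
  .cons (wadj (mm p02 p01) (mm p02 p23) (by decide)) <|
  .cons (wadj (mm p02 p23) (mm p02 p14) (by decide)) <|
  .cons (wadj (mm p02 p14) (mm p02 p03) (by decide)) <|
  .cons (wadj (mm p02 p03) (mm p02 p24) (by decide)) <|
  .cons (wadj (mm p02 p24) (mm p02 p13) (by decide)) <|
  .cons (wadj (mm p02 p13) (mm p02 p04) (by decide)) <|
  .cons (wadj (mm p02 p04) (mm p02 p12) (by decide)) <|
  .cons (wadj (mm p02 p12) (mm p02 p34) (by decide)) <|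
  .cons (wadj (mm p02 p34) (mm p02 p01) (by decide)) .nil

def c03 : (W p03).Walk (mm p03 p01) (mm p03 p01) :=
  .cons (wadj (mm p03 p01) (mm p03 p23) (by decide)) <|
  .cons (wadj (mm p03 p23) (mm p03 p14) (by decide)) <|
  .cons (wadj (mm p03 p14) (mm p03 p02) (by decide)) <|
  .cons (wadj (mm p03 p02) (mm p03 p34) (by decide)) <|
  .cons (wadj (mm p03 p34) (mm p03 p12) (by decide)) <|
  .cons (wadj (mm p03 p12) (mm p03 p04) (by decide)) <|
  .cons (wadj (mm p03 p04) (mm p03 p13) (by decide)) <|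
  .cons (wadj (mm p03 p13) (mm p03 p24) (by decide)) <|
  .cons (wadj (mm p03 p24) (mm p03 p01) (by decide)) .nil

def c04 : (W p04).Walk (mm p04 p01) (mm p04 p01) :=
  .cons (wadj (mm p04 p01) (mm p04 p23) (by decide)) <|
  .cons (wadj (mm p04 p23) (mm p04 p14) (by decide)) <|
  .cons (wadj (mm p04 p14) (mm p04 p02) (by decide)) <|
  .cons (wadj (mm p04 p02) (mm p04 p13) (by decide)) <|
  .cons (wadj (mm p04 p13) (mm p04 p24) (by decide)) <|
  .cons (wadj (mm p04 p24) (mm p04 p03) (by decide)) <|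
  .cons (wadj (mm p04 p03) (mm p04 p12) (by decide)) <|
  .cons (wadj (mm p04 p12) (mm p04 p34) (by decide)) <|
  .cons (wadj (mm p04 p34) (mm p04 p01) (by decide)) .nil

def c12 : (W p12).Walk (mm p12 p01) (mm p12 p01) :=
  .cons (wadj (mm p12 p01) (mm p12 p23) (by decide)) <|
  .cons (wadj (mm p12 p23) (mm p12 p04) (by decide)) <|
  .cons (wadj (mm p12 p04) (mm p12 p13) (by decide)) <|
  .cons (wadj (mm p12 p13) (mm p12 p24) (by decide)) <|
  .cons (wadj (mm p12 p24) (mm p12 p03) (by decide)) <|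
  .cons (wadj (mm p12 p03) (mm p12 p14) (by decide)) <|
  .cons (wadj (mm p12 p14) (mm p12 p02) (by decide)) <|
  .cons (wadj (mm p12 p02) (mm p12 p34) (by decide)) <|
  .cons (wadj (mm p12 p34) (mm p12 p01) (by decide)) .nil

def c13 : (W p13).Walk (mm p13 p01) (mm p13 p01) :=
  .cons (wadj (mm p13 p01) (mm p13 p23) (by decide)) <|
  .cons (wadj (mm p13 p23) (mm p13 p04) (by decide)) <|
  .cons (wadj (mm p13 p04) (mm p13 p12) (by decide)) <|
  .cons (wadj (mm p13 p12) (mm p13 p34) (by decide)) <|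
  .cons (wadj (mm p13 p34) (mm p13 p02) (by decide)) <|
  .cons (wadj (mm p13 p02) (mm p13 p14) (by decide)) <|
  .cons (wadj (mm p13 p14) (mm p13 p03) (by decide)) <|
  .cons (wadj (mm p13 p03) (mm p13 p24) (by decide)) <|
  .cons (wadj (mm p13 p24) (mm p13 p01) (by decide)) .nil

def c14 : (W p14).Walk (mm p14 p01) (mm p14 p01) :=
  .cons (wadj (mm p14 p01) (mm p14 p23) (by decide)) <|
  .cons (wadj (mm p14 p23) (mm p14 p04) (by decide)) <|
  .cons (wadj (mm p14 p04) (mm p14 p12) (by decide)) <|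
  .cons (wadj (mm p14 p12) (mm p14 p03) (by decide)) <|
  .cons (wadj (mm p14 p03) (mm p14 p24) (by decide)) <|
  .cons (wadj (mm p14 p24) (mm p14 p13) (by decide)) <|
  .cons (wadj (mm p14 p13) (mm p14 p02) (by decide)) <|
  .cons (wadj (mm p14 p02) (mm p14 p34) (by decide)) <|
  .cons (wadj (mm p14 p34) (mm p14 p01) (by decide)) .nil

def c23 : (W p23).Walk (mm p23 p01) (mm p23 p01) :=
  .cons (wadj (mm p23 p01) (mm p23 p24) (by decide)) <|
  .cons (wadj (mm p23 p24) (mm p23 p03) (by decide)) <|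
  .cons (wadj (mm p23 p03) (mm p23 p14) (by decide)) <|
  .cons (wadj (mm p23 p14) (mm p23 p02) (by decide)) <|
  .cons (wadj (mm p23 p02) (mm p23 p13) (by decide)) <|
  .cons (wadj (mm p23 p13) (mm p23 p04) (by decide)) <|
  .cons (wadj (mm p23 p04) (mm p23 p12) (by decide)) <|
  .cons (wadj (mm p23 p12) (mm p23 p34) (by decide)) <|
  .cons (wadj (mm p23 p34) (mm p23 p01) (by decide)) .nil

def c24 : (W p24).Walk (mm p24 p01) (mm p24 p01) :=
  .cons (wadj (mm p24 p01) (mm p24 p23) (by decide)) <|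
  .cons (wadj (mm p24 p23) (mm p24 p04) (by decide)) <|
  .cons (wadj (mm p24 p04) (mm p24 p13) (by decide)) <|
  .cons (wadj (mm p24 p13) (mm p24 p02) (by decide)) <|
  .cons (wadj (mm p24 p02) (mm p24 p14) (by decide)) <|
  .cons (wadj (mm p24 p14) (mm p24 p03) (by decide)) <|
  .cons (wadj (mm p24 p03) (mm p24 p12) (by decide)) <|
  .cons (wadj (mm p24 p12) (mm p24 p34) (by decide)) <|
  .cons (wadj (mm p24 p34) (mm p24 p01) (by decide)) .nil

def c34 : (W p34).Walk (mm p34 p01) (mm p34 p01) :=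
  .cons (wadj (mm p34 p01) (mm p34 p23) (by decide)) <|
  .cons (wadj (mm p34 p23) (mm p34 p04) (by decide)) <|
  .cons (wadj (mm p34 p04) (mm p34 p12) (by decide)) <|
  .cons (wadj (mm p34 p12) (mm p34 p03) (by decide)) <|
  .cons (wadj (mm p34 p03) (mm p34 p14) (by decide)) <|
  .cons (wadj (mm p34 p14) (mm p34 p02) (by decide)) <|
  .cons (wadj (mm p34 p02) (mm p34 p13) (by decide)) <|
  .cons (wadj (mm p34 p13) (mm p34 p24) (by decide)) <|
  .cons (wadj (mm p34 p24) (mm p34 p01) (by decide)) .nil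

lemma hc01 : (c01).IsHamiltonianCycle := by
  rw [SimpleGraph.Walk.isHamiltonianCycle_iff_isCycle_and_support_count_tail_eq_one]
  refine ⟨?_, by decide⟩
  rw [SimpleGraph.Walk.isCycle_def, SimpleGraph.Walk.isTrail_def]
  exact ⟨by decide, by simp [c01], by decide⟩

lemma hc02 : (c02).IsHamiltonianCycle := by
  rw [SimpleGraph.Walk.isHamiltonianCycle_iff_isCycle_and_support_count_tail_eq_one]
  refine ⟨?_, by decide⟩
  rw [SimpleGraph.Walk.isCycle_def, SimpleGraph.Walk.isTrail_def]
  exact ⟨by decide, by simp [c02], by decide⟩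

lemma hc03 : (c03).IsHamiltonianCycle := by
  rw [SimpleGraph.Walk.isHamiltonianCycle_iff_isCycle_and_support_count_tail_eq_one]
  refine ⟨?_, by decide⟩
  rw [SimpleGraph.Walk.isCycle_def, SimpleGraph.Walk.isTrail_def]
  exact ⟨by decide, by simp [c03], by decide⟩

lemma hc04 : (c04).IsHamiltonianCycle := by
  rw [SimpleGraph.Walk.isHamiltonianCycle_iff_isCycle_and_support_count_tail_eq_one]
  refine ⟨?_, by decide⟩
  rw [SimpleGraph.Walk.isCycle_def, SimpleGraph.Walk.isTrail_def]
  exact ⟨by decide, by simp [c04], by decide⟩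

lemma hc12 : (c12).IsHamiltonianCycle := by
  rw [SimpleGraph.Walk.isHamiltonianCycle_iff_isCycle_and_support_count_tail_eq_one]
  refine ⟨?_, by decide⟩
  rw [SimpleGraph.Walk.isCycle_def, SimpleGraph.Walk.isTrail_def]
  exact ⟨by decide, by simp [c12], by decide⟩

lemma hc13 : (c13).IsHamiltonianCycle := by
  rw [SimpleGraph.Walk.isHamiltonianCycle_iff_isCycle_and_support_count_tail_eq_one]
  refine ⟨?_, by decide⟩
  rw [SimpleGraph.Walk.isCycle_def, SimpleGraph.Walk.isTrail_def]
  exact ⟨by decide, by simp [c13], by decide⟩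

lemma hc14 : (c14).IsHamiltonianCycle := by
  rw [SimpleGraph.Walk.isHamiltonianCycle_iff_isCycle_and_support_count_tail_eq_one]
  refine ⟨?_, by decide⟩
  rw [SimpleGraph.Walk.isCycle_def, SimpleGraph.Walk.isTrail_def]
  exact ⟨by decide, by simp [c14], by decide⟩

lemma hc23 : (c23).IsHamiltonianCycle := by
  rw [SimpleGraph.Walk.isHamiltonianCycle_iff_isCycle_and_support_count_tail_eq_one]
  refine ⟨?_, by decide⟩
  rw [SimpleGraph.Walk.isCycle_def, SimpleGraph.Walk.isTrail_def]
  exact ⟨by decide, by simp [c23], by decide⟩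

lemma hc24 : (c24).IsHamiltonianCycle := by
  rw [SimpleGraph.Walk.isHamiltonianCycle_iff_isCycle_and_support_count_tail_eq_one]
  refine ⟨?_, by decide⟩
  rw [SimpleGraph.Walk.isCycle_def, SimpleGraph.Walk.isTrail_def]
  exact ⟨by decide, by simp [c24], by decide⟩

lemma hc34 : (c34).IsHamiltonianCycle := by
  rw [SimpleGraph.Walk.isHamiltonianCycle_iff_isCycle_and_support_count_tail_eq_one]
  refine ⟨?_, by decide⟩
  rw [SimpleGraph.Walk.isCycle_def, SimpleGraph.Walk.isTrail_def]
  exact ⟨by decide, by simp [c34], by decide⟩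

/-! ### Non-hamiltonicity via a verified depth-first search -/

def pdfs {V : Type*} [DecidableEq V] (adj : V → V → Bool) (first : V) :
    ℕ → List V → V → Bool
  | 0, rem, cur => rem.isEmpty && adj cur first
  | n+1, rem, cur => rem.any fun v => adj cur v && pdfs adj first n (rem.erase v) v

lemma pdfs_complete {V : Type*} [DecidableEq V] (adj : V → V → Bool) (first : V) :
    ∀ (l rem : List V) (cur : V), l.Perm rem →
      List.Chain (fun x y => adj x y = true) cur l →
      adj (l.getLastD cur) first = true →
      pdfs adj first l.length rem cur = true := by
  intro l
  induction l with
  | nil =>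
    intro rem cur hperm _ hlast
    have : rem = [] := hperm.symm.eq_nil
    subst this
    simpa [pdfs] using hlast
  | cons v l ih =>
    intro rem cur hperm hchain hlast
    rw [List.Chain, List.isChain_cons_cons] at hchain
    have hv : v ∈ rem := hperm.mem_iff.mp List.mem_cons_self
    have hperm' : l.Perm (rem.erase v) := by
      have := hperm.erase v
      simpa using this
    simp only [List.length_cons, pdfs, List.any_eq_true]
    refine ⟨v, hv, ?_⟩
    rw [Bool.and_eq_true]
    rw [List.getLastD_cons] at hlast
    exact ⟨hchain.1, ih _ _ hperm' hchain.2 hlast⟩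

lemma chain_append_singleton {α : Type*} {R : α → α → Prop} :
    ∀ (l : List α) (a b : α),
      List.Chain R a (l ++ [b]) ↔ List.Chain R a l ∧ R (l.getLastD a) b
  | [], a, b => by simp [List.Chain]
  | c :: l, a, b => by
    have ih := chain_append_singleton (R := R) l c b
    simp only [List.Chain] at ih
    simp only [List.Chain, List.cons_append, List.isChain_cons_cons, ih,
      List.getLastD_cons, and_assoc]

def padj (a b : PV5) : Bool := decide (petersenGraph.Adj a b)

def pverts : List PV5 := [p01, p02, p03, p04, p12, p13, p14, p23, p24, p34]

lemma pverts_count : ∀ v : PV5, pverts.count v = 1 := by decide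

set_option maxRecDepth 20000 in
lemma pdfs_false : ∀ a : PV5, pdfs padj a 9 (pverts.erase a) a = false := by decide

lemma petersen_not_hamiltonian : ¬ IsHamiltonianGraph petersenGraph := by
  rintro ⟨a, p, hp⟩
  obtain ⟨L, hL⟩ : ∃ L, p.support = a :: L := ⟨p.support.tail, SimpleGraph.Walk.support_eq_cons p⟩
  have hcount : ∀ b, L.count b = 1 := by
    have := (SimpleGraph.Walk.isHamiltonianCycle_iff_isCycle_and_support_count_tail_eq_one.mp hp).2
    intro b
    have hb := this b
    rw [hL] at hb
    simp at hb; convert hb using 2; exact lawful_beq_subsingleton _ _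
  have hLne : L ≠ [] := by
    intro h
    have := hcount a
    rw [h] at this
    simp at this
  have hlast? : L.getLast? = some a := by
    have h1 : p.support.getLast? = some a := by
      rw [List.getLast?_eq_getLast (by simp), p.getLast_support]
    rw [hL] at h1
    cases L with
    | nil => exact absurd rfl hLne
    | cons x L' => rwa [List.getLast?_cons_cons] at h1
  have hsplit : L.dropLast ++ [a] = L := List.dropLast_append_getLast? a hlast?
  set l' : List PV5 := L.dropLast with hl'def
  have hchain : List.Chain petersenGraph.Adj a L := by
    have := p.isChain_adj_support
    rw [hL] at this
    exact this
  rw [← hsplit, chain_append_singleton] at hchain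
  have hcount' : ∀ b : PV5, l'.count b = if b = a then 0 else 1 := by
    intro b
    have := hcount b
    rw [← hsplit, List.count_append] at this
    by_cases hb : b = a
    · subst hb
      simpa using this
    · simp only [List.count_singleton] at this
      rw [if_neg (by simpa using Subtype.coe_injective.ne (Ne.symm hb))] at this
      simpa [hb] using this
  have hperm : l'.Perm (pverts.erase a) := by
    rw [List.perm_iff_count]
    intro b
    rw [List.count_erase, pverts_count b, hcount' b]
    by_cases hb : b = a
    · subst hb; simp
    · simp [hb, Ne.symm hb, Subtype.coe_injective.ne (Ne.symm hb)]
  have hlen : l'.length = 9 := by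
    rw [hperm.length_eq, List.length_erase_of_mem, show pverts.length = 10 from rfl]
    rw [← List.count_pos_iff]
    rw [pverts_count a]
    norm_num
  have hbchain : List.Chain (fun x y => padj x y = true) a l' :=
    List.IsChain.imp (fun x y h => decide_eq_true h) hchain.1
  have hblast : padj (l'.getLastD a) a = true := decide_eq_true hchain.2
  have := pdfs_complete padj a l' (pverts.erase a) a hperm hbchain hblast
  rw [hlen] at this
  rw [pdfs_false a] at this
  exact absurd this (by simp)

theorem petersen_hypohamiltonian : Hypohamiltonian petersenGraph := by
  refine ⟨⟨p01⟩, petersen_not_hamiltonian, ?_⟩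
  intro v
  have hmem : ∀ v : PV5, v ∈ pverts := by decide
  have hv := hmem v
  simp only [pverts, List.mem_cons, List.not_mem_nil, or_false] at hv
  rcases hv with rfl|rfl|rfl|rfl|rfl|rfl|rfl|rfl|rfl|rfl
  · exact ⟨_, c01, hc01⟩
  · exact ⟨_, c02, hc02⟩
  · exact ⟨_, c03, hc03⟩
  · exact ⟨_, c04, hc04⟩
  · exact ⟨_, c12, hc12⟩
  · exact ⟨_, c13, hc13⟩
  · exact ⟨_, c14, hc14⟩
  · exact ⟨_, c23, hc23⟩
  · exact ⟨_, c24, hc24⟩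
  · exact ⟨_, c34, hc34⟩
end

section
/- A hypohamiltonian graph contains no triangle through a vertex of degree 3; more precisely, if v has exactly three neighbors in a hypohamiltonian graph G, then no two neighbors of v are adjacent. -/
open SimpleGraph Walk

section Aux

variable {V : Type*} [DecidableEq V] {G : SimpleGraph V}

private lemma aux_rotate {v u : V} {p : G.Walk v v} (hp : p.IsHamiltonianCycle)
    (hmem : u ∈ p.support) : (p.rotate u hmem).IsHamiltonianCycle := by
  rw [Walk.isHamiltonianCycle_iff_isCycle_and_support_count_tail_eq_one] at hp ⊢
  exact ⟨hp.1.rotate hmem, fun z =>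
    ((Walk.support_rotate p u hmem).perm.count_eq z).trans (hp.2 z)⟩

private lemma aux_reverse {v : V} {p : G.Walk v v} (hp : p.IsHamiltonianCycle) :
    p.reverse.IsHamiltonianCycle := by
  rw [Walk.isHamiltonianCycle_iff_isCycle_and_support_count_tail_eq_one] at hp ⊢
  obtain ⟨hc, hcount⟩ := hp
  have hne : p.support ≠ [] := p.support_ne_nil
  have hlast : p.support.getLast hne = v := p.getLast_support
  have h2 : p.support.dropLast ++ [v] = p.support := by
    have h2' := List.dropLast_append_getLast hne
    rw [hlast] at h2'
    exact h2'
  have htail : p.reverse.support.tail = p.support.dropLast.reverse := by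
    rw [Walk.support_reverse, List.tail_reverse]
  have hdropcount : ∀ z, p.support.dropLast.count z = p.support.tail.count z := by
    intro z
    have h3 := congrArg (List.count z) h2
    rw [List.count_append] at h3
    conv_rhs at h3 => rw [Walk.support_eq_cons]
    simp only [List.count_cons, List.count_singleton, List.count_nil] at h3
    omega
  have key : ∀ z, p.reverse.support.tail.count z = 1 := by
    intro z
    rw [htail, List.count_reverse, hdropcount, hcount]
  refine ⟨?_, key⟩
  have htrail : p.reverse.IsTrail := hc.isTrail.reverse p
  refine ⟨⟨htrail, ?_⟩, ?_⟩
  · intro hnil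
    apply hc.ne_nil
    have := congrArg Walk.reverse hnil
    simpa using this
  · exact List.nodup_iff_count_le_one.2 fun z => le_of_eq (key z)

private lemma key_lemma (G : SimpleGraph V) (v a b : V)
    (hva : G.Adj v a) (hvb : G.Adj v b) (hab : G.Adj a b)
    (v' x : ({a}ᶜ : Set V)) (hv' : (v' : V) = v) (hx : (x : V) = b)
    (e : (G.induce ({a}ᶜ : Set V)).Adj v' x) (q' : (G.induce ({a}ᶜ : Set V)).Walk x v')
    (hq : (Walk.cons e q').IsHamiltonianCycle) : IsHamiltonianGraph G := by
  classical
  set f : G.induce ({a}ᶜ : Set V) →g G := (SimpleGraph.Embedding.induce ({a}ᶜ : Set V)).toHom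
    with hfdef
  have hf : ∀ z : ({a}ᶜ : Set V), f z = (z : V) := fun _ => rfl
  have hinj : Function.Injective ⇑f := by
    intro z₁ z₂ hz
    exact Subtype.ext (by rw [← hf z₁, ← hf z₂, hz])
  set P : G.Walk b v := ((q'.map f).copy (by rw [hf, hx]) (by rw [hf, hv'])) with hPdef
  rw [Walk.isHamiltonianCycle_iff_isCycle_and_support_count_tail_eq_one] at hq
  obtain ⟨hqc, hqcount⟩ := hq
  have hq'path : q'.IsPath := ((Walk.cons_isCycle_iff q' e).1 hqc).1
  have hcount : ∀ z : ({a}ᶜ : Set V), q'.support.count z = 1 := by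
    intro z
    have := hqcount z
    simp at this
    convert this using 2
    exact lawful_beq_subsingleton _ _
  have hPsup : P.support = q'.support.map Subtype.val := by
    simp [hPdef, Walk.support_copy, Walk.support_map]
    rfl
  have haP : a ∉ P.support := by
    rw [hPsup]
    intro hmem
    obtain ⟨z, hz, hza⟩ := List.mem_map.1 hmem
    exact (Set.mem_compl_singleton_iff.1 z.2) hza
  have hPpath : P.IsPath := by
    rw [hPdef, Walk.isPath_copy]
    exact Walk.map_isPath_of_injective hinj hq'path
  have h5 : (Walk.cons hab P).IsPath := (Walk.cons_isPath_iff hab P).2 ⟨hPpath, haP⟩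
  have h6 : s(v, a) ∉ (Walk.cons hab P).edges := by
    simp only [Walk.edges_cons, List.mem_cons]
    rintro (heq | hmem)
    · rw [Sym2.eq_iff] at heq
      rcases heq with ⟨h1, h2⟩ | ⟨h1, h2⟩
      · exact hva.ne h1
      · exact hvb.ne h1
    · exact haP (Walk.snd_mem_support_of_mem_edges P hmem)
  refine ⟨v, Walk.cons hva (Walk.cons hab P), ?_⟩
  rw [Walk.isHamiltonianCycle_iff_isCycle_and_support_count_tail_eq_one]
  constructor
  · exact (Walk.cons_isCycle_iff _ hva).2 ⟨h5, h6⟩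
  · intro z
    have htail : (Walk.cons hva (Walk.cons hab P)).support.tail = a :: P.support := by
      simp [Walk.support_cons]
    rw [htail]
    by_cases hz : z = a
    · rw [hz, List.count_cons_self]
      have : P.support.count a = 0 := List.count_eq_zero.2 haP
      omega
    · rw [List.count_cons_of_ne (Ne.symm hz), hPsup]
      have hzmem : z ∈ ({a}ᶜ : Set V) := Set.mem_compl_singleton_iff.2 hz
      have : z = ((⟨z, hzmem⟩ : ({a}ᶜ : Set V)) : V) := rfl
      rw [this, List.count_map_of_injective _ _ Subtype.val_injective]
      exact hcount _

end Aux

theorem hypohamiltonian_no_triangle_at_cubic_vertex {V : Type*} [DecidableEq V] [Fintype V]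
    (G : SimpleGraph V) [DecidableRel G.Adj] (h : Hypohamiltonian G)
    (v : V) (hdeg : G.degree v = 3) :
    ∀ a b : V, G.Adj v a → G.Adj v b → ¬ G.Adj a b := by
  intro a b hva hvb hab
  have h1 : ¬ IsHamiltonianGraph G := h.2.1
  obtain ⟨r, p0, hp0⟩ := h.2.2 a
  have hvmem : v ∈ ({a}ᶜ : Set V) := Set.mem_compl_singleton_iff.2 hva.ne
  set v' : ({a}ᶜ : Set V) := ⟨v, hvmem⟩ with hv'def
  have hvsup : v' ∈ p0.support := hp0.mem_support v'
  set q := p0.rotate v' hvsup with hqdef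
  have hq : q.IsHamiltonianCycle := aux_rotate hp0 hvsup
  -- uniqueness of the "third" neighbor
  have huniq : ∀ w₁ w₂ : V, G.Adj v w₁ → w₁ ≠ a → w₁ ≠ b → G.Adj v w₂ → w₂ ≠ a → w₂ ≠ b →
      w₁ = w₂ := by
    intro w₁ w₂ h1a h1b h1c h2a h2b h2c
    have hane : a ≠ b := hab.ne
    have hamem : a ∈ G.neighborFinset v := (G.mem_neighborFinset v a).2 hva
    have hbmem : b ∈ (G.neighborFinset v).erase a :=
      Finset.mem_erase.2 ⟨hane.symm, (G.mem_neighborFinset v b).2 hvb⟩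
    have hcard : (((G.neighborFinset v).erase a).erase b).card = 1 := by
      rw [Finset.card_erase_of_mem hbmem, Finset.card_erase_of_mem hamem]
      have hdeg' : (G.neighborFinset v).card = 3 := hdeg
      rw [hdeg']
    have hm1 : w₁ ∈ ((G.neighborFinset v).erase a).erase b :=
      Finset.mem_erase.2 ⟨h1c, Finset.mem_erase.2 ⟨h1b, (G.mem_neighborFinset v w₁).2 h1a⟩⟩
    have hm2 : w₂ ∈ ((G.neighborFinset v).erase a).erase b :=
      Finset.mem_erase.2 ⟨h2c, Finset.mem_erase.2 ⟨h2b, (G.mem_neighborFinset v w₂).2 h2a⟩⟩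
    exact Finset.card_le_one.1 (le_of_eq hcard) _ hm1 _ hm2
  have hclass : ∀ y : ({a}ᶜ : Set V), (G.induce ({a}ᶜ : Set V)).Adj v' y →
      G.Adj v (y : V) ∧ (y : V) ≠ a := by
    intro y hy
    refine ⟨?_, Set.mem_compl_singleton_iff.1 y.2⟩
    simpa [comap_adj] using hy
  obtain ⟨x, e, q', hq1⟩ := Walk.not_nil_iff.mp hq.isCycle.not_nil
  by_cases hxb : (x : V) = b
  · exact h1 (key_lemma G v a b hva hvb hab v' x rfl hxb e q' (hq1 ▸ hq))
  · have hqr : q.reverse.IsHamiltonianCycle := aux_reverse hq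
    obtain ⟨x₂, e₂, r', hq2⟩ := Walk.not_nil_iff.mp hqr.isCycle.not_nil
    by_cases hx2b : (x₂ : V) = b
    · exact h1 (key_lemma G v a b hva hvb hab v' x₂ rfl hx2b e₂ r' (hq2 ▸ hqr))
    · exfalso
      have hx1 := hclass x e
      have hx2 := hclass x₂ e₂
      have hxx : x = x₂ :=
        Subtype.ext (huniq _ _ hx1.1 hx1.2 hxb hx2.1 hx2.2 hx2b)
      subst hxx
      -- edge-based contradiction: the first edge equals the last edge
      have he1 : q.edges = s(v', x) :: q'.edges := by rw [hq1]; simp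
      have he2 : q.edges.reverse = s(v', x) :: r'.edges := by
        rw [← Walk.edges_reverse, hq2]; simp
      have hnodup : q.edges.Nodup := hq.isCycle.isTrail.edges_nodup
      have hlen : 3 ≤ q.length := hq.isCycle.three_le_length
      have hlen' : q.edges.length = q.length := q.length_edges
      have heq : (s(v', x) : Sym2 ({a}ᶜ : Set V)) ∉ q'.edges := by
        rw [he1] at hnodup
        exact (List.nodup_cons.1 hnodup).1
      have hrev : q.edges = r'.edges.reverse ++ [s(v', x)] := by
        have := congrArg List.reverse he2
        simpa using this
      rcases hLeq : r'.edges.reverse with _ | ⟨s', L⟩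
      · rw [hLeq] at hrev
        simp at hrev
        rw [hrev] at hlen'
        simp at hlen'
        omega
      · rw [hLeq] at hrev
        rw [he1] at hrev
        have hcons := hrev
        simp only [List.cons_append] at hcons
        have h1' : s(v', x) = s' ∧ q'.edges = L ++ [s(v', x)] := by
          constructor
          · exact (List.cons.injEq _ _ _ _ ▸ hcons).1
          · exact (List.cons.injEq _ _ _ _ ▸ hcons).2
        apply heq
        rw [h1'.2]
        simp
end
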